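/- Let G = G₁ *_H G₂ be an amalgamated free product of countable groups, fix a transversal T₁ (resp. T₂) for the right cosets {Hx : x ∈ G₁} (resp. {Hx : x ∈ G₂}) containing the identity, and let p₁ : G → {0,1} be the indicator function of the set of elements whose normal form h t₁ t₂ ⋯ t_k begins with a letter t₁ ∈ T₁∖{1}. Then for every g ∈ G and every sequence (g_n) in G going to infinity relative to {H}, one has p₁(g_n) − p₁(g_n g) → 0; equivalently, the image of p₁ in ℓ∞(G)/c₀(G,{H}) is fixed by the right translation action of G. -/

import Mathlib

open scoped Pointwise ComplexOrder

namespace PPx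

universe u v w

/-- A function `G → ℂ` is bounded, i.e. belongs to `ℓ^∞(G)`. -/
def Bdd {G : Type*} (f : G → ℂ) : Prop := ∃ C : ℝ, ∀ x, ‖f x‖ ≤ C

/-- A sequence `g : ℕ → G` goes to infinity relative to the family of subgroups `S`:
for every `H ∈ S` and `t₁ t₂ : G`, `gₙ ∈ t₁ H t₂` for only finitely many `n`. -/
def TendstoInftyRel {G : Type*} [Group G] (S : Set (Subgroup G)) (g : ℕ → G) : Prop :=
  ∀ H ∈ S, ∀ t₁ t₂ : G, {n : ℕ | ∃ h ∈ H, g n = t₁ * h * t₂}.Finite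

/-- `f` belongs to `c₀(G, S)`: `f` is bounded and `f(gₙ) → 0` whenever `gₙ → ∞/S`. -/
def MemC0Rel {G : Type*} [Group G] (S : Set (Subgroup G)) (f : G → ℂ) : Prop :=
  Bdd f ∧ ∀ g : ℕ → G, TendstoInftyRel S g →
    Filter.Tendsto (fun n => f (g n)) Filter.atTop (nhds 0)

/-- `f` represents a right-translation-fixed element of `ℓ^∞(G)/c₀(G,S)`. -/
def MemFixQuot {G : Type*} [Group G] (S : Set (Subgroup G)) (f : G → ℂ) : Prop :=
  Bdd f ∧ ∀ h : G, MemC0Rel S (fun x => f (x * h) - f x)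

/-- `φ` encodes a left-translation-invariant state on the C*-algebra of
right-translation-fixed elements of `ℓ^∞(G)/c₀(G,S)`. -/
def IsInvariantStateRel {G : Type*} [Group G] (S : Set (Subgroup G))
    (φ : (G → ℂ) → ℂ) : Prop :=
  (∀ f₁ f₂, MemFixQuot S f₁ → MemFixQuot S f₂ → φ (f₁ + f₂) = φ f₁ + φ f₂) ∧
  (∀ (c : ℂ) (f), MemFixQuot S f → φ (c • f) = c * φ f) ∧
  (∀ f, MemFixQuot S f → 0 ≤ φ (star f * f)) ∧
  φ 1 = 1 ∧
  (∀ f, MemC0Rel S f → φ f = 0) ∧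
  (∀ (h : G) (f), MemFixQuot S f → φ (fun x => f (h⁻¹ * x)) = φ f)

/-- `G` is properly proximal relative to the family of subgroups `S`. -/
def ProperlyProximalRel (G : Type*) [Group G] (S : Set (Subgroup G)) : Prop :=
  ¬ ∃ φ : (G → ℂ) → ℂ, IsInvariantStateRel S φ

/-- `G` is properly proximal. -/
def ProperlyProximal (G : Type*) [Group G] : Prop :=
  ProperlyProximalRel G {⊥}


/-- `(G, j₁, j₂)` is the amalgamated free product `G₁ *_H G₂` of the injections
`f₁ : H →* G₁` and `f₂ : H →* G₂`: the square commutes and `G` satisfies the universal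
property of the pushout of `f₁` and `f₂`. -/
def IsAmalgamatedProduct {H G₁ G₂ G : Type*} [Group H] [Group G₁] [Group G₂] [Group G]
    (f₁ : H →* G₁) (f₂ : H →* G₂) (j₁ : G₁ →* G) (j₂ : G₂ →* G) : Prop :=
  j₁.comp f₁ = j₂.comp f₂ ∧
  ∀ (K : Type w) (_ : Group K) (k₁ : G₁ →* K) (k₂ : G₂ →* K),
    k₁.comp f₁ = k₂.comp f₂ → ∃! k : G →* K, k.comp j₁ = k₁ ∧ k.comp j₂ = k₂



universe u1 u2 u3 u4

set_option linter.unusedSectionVars false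
set_option maxHeartbeats 1000000

/-- permutation monoid hom on Option -/
def permOptionHom (α : Type*) : Equiv.Perm α →* Equiv.Perm (Option α) where
  toFun e := e.optionCongr
  map_one' := Equiv.optionCongr_refl
  map_mul' a b := by
    show (b.trans a).optionCongr = (b.optionCongr).trans (a.optionCongr)
    rw [Equiv.optionCongr_trans]

theorem generation
    {H : Type u1} {G₁ : Type u2} {G₂ : Type u3} {G : Type u4}
    [Group H] [Group G₁] [Group G₂] [Group G]
    [Countable G]
    (f₁ : H →* G₁) (f₂ : H →* G₂)
    (j₁ : G₁ →* G) (j₂ : G₂ →* G)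
    (hG : IsAmalgamatedProduct.{w} f₁ f₂ j₁ j₂) :
    Subgroup.closure (Set.range j₁ ∪ Set.range j₂) = ⊤ := by
  classical
  set C := Subgroup.closure (Set.range j₁ ∪ Set.range j₂) with hC
  rw [eq_top_iff]
  intro g _
  by_contra hg
  haveI : Countable (G ⧸ C) := Quotient.countable
  let X := Option (G ⧸ C)
  let ρ : G →* Equiv.Perm X := (permOptionHom (G ⧸ C)).comp (MulAction.toPermHom G (G ⧸ C))
  let τ : Equiv.Perm X := Equiv.swap (some ((1 : G) : G ⧸ C)) none
  let ρ' : G →* Equiv.Perm X := ((MulAut.conj τ).toMonoidHom).comp ρ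
  have hτ : τ⁻¹ = τ := by simp [τ, Equiv.swap_inv]
  have hρn : ∀ c : G, ρ c none = none := fun c => rfl
  have hρs : ∀ (c : G) (q : G ⧸ C), ρ c (some q) = some (c • q) := fun c q => rfl
  have hfix : ∀ c : G, c ∈ C → ρ' c = ρ c := by
    intro c hc
    have h2 : ρ c (some ((1 : G) : G ⧸ C)) = some ((1 : G) : G ⧸ C) := by
      rw [hρs]
      congr 1
      change ((c * 1 : G) : G ⧸ C) = _
      rw [mul_one]
      exact (QuotientGroup.eq).2 (by simpa using C.inv_mem hc)
    show τ * ρ c * τ⁻¹ = ρ c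
    rw [hτ]
    refine Equiv.ext fun x => ?_
    rcases eq_or_ne x (some ((1 : G) : G ⧸ C)) with rfl | hx1
    · rw [Equiv.Perm.mul_apply, Equiv.Perm.mul_apply,
        Equiv.swap_apply_left, hρn, Equiv.swap_apply_right, h2]
    rcases eq_or_ne x none with rfl | hxn
    · rw [Equiv.Perm.mul_apply, Equiv.Perm.mul_apply,
        Equiv.swap_apply_right, h2, Equiv.swap_apply_left, hρn]
    · have hτx : τ x = x := Equiv.swap_apply_of_ne_of_ne hx1 hxn
      rw [Equiv.Perm.mul_apply, Equiv.Perm.mul_apply, hτx]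
      have hne1 : ρ c x ≠ some ((1 : G) : G ⧸ C) := fun h => hx1 (by
        apply (ρ c).injective; rw [h, h2])
      have hnen : ρ c x ≠ none := fun h => hxn (by
        apply (ρ c).injective; rw [h, hρn])
      exact Equiv.swap_apply_of_ne_of_ne hne1 hnen
  -- shrink
  haveI : Small.{w} (Equiv.Perm X) :=
    small_of_injective (f := fun p : Equiv.Perm X => (p : X → X))
      (fun a b h => Equiv.ext (congrFun h))
  let E : Shrink.{w} (Equiv.Perm X) ≃* Equiv.Perm X := Shrink.mulEquiv
  have hcomp : ((E.symm.toMonoidHom.comp ρ).comp j₁).comp f₁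
      = ((E.symm.toMonoidHom.comp ρ).comp j₂).comp f₂ := by
    ext x
    simp only [MonoidHom.comp_apply]
    rw [show j₁ (f₁ x) = j₂ (f₂ x) from DFunLike.congr_fun hG.1 x]
  obtain ⟨k, hk, huniq⟩ := hG.2 (Shrink.{w} (Equiv.Perm X)) _
    ((E.symm.toMonoidHom.comp ρ).comp j₁) ((E.symm.toMonoidHom.comp ρ).comp j₂) hcomp
  have hj₁C : ∀ x : G₁, j₁ x ∈ C := fun x =>
    Subgroup.subset_closure (Set.mem_union_left _ ⟨x, rfl⟩)
  have hj₂C : ∀ x : G₂, j₂ x ∈ C := fun x =>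
    Subgroup.subset_closure (Set.mem_union_right _ ⟨x, rfl⟩)
  have h1 : E.symm.toMonoidHom.comp ρ = k := by
    refine huniq _ ⟨?_, ?_⟩ <;> rfl
  have h2 : E.symm.toMonoidHom.comp ρ' = k := by
    apply huniq
    constructor
    · ext x
      simp only [MonoidHom.comp_apply, MulEquiv.coe_toMonoidHom]
      rw [hfix _ (hj₁C x)]
    · ext x
      simp only [MonoidHom.comp_apply, MulEquiv.coe_toMonoidHom]
      rw [hfix _ (hj₂C x)]
  have h3 : ρ' g = ρ g := by
    have := congrArg (fun m : G →* Shrink.{w} (Equiv.Perm X) => E (m g)) (h1.trans h2.symm)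
    simpa using this.symm
  -- derive contradiction
  have h4 : (τ * ρ g * τ⁻¹) none = ρ g none := by
    rw [show τ * ρ g * τ⁻¹ = ρ' g from rfl, h3]
  rw [Equiv.Perm.mul_apply, Equiv.Perm.mul_apply, hτ, hρn] at h4
  have hτn : τ none = some ((1 : G) : G ⧸ C) := Equiv.swap_apply_right _ _
  rw [hτn, hρs] at h4
  have h6 : (g • ((1 : G) : G ⧸ C)) = ((1 : G) : G ⧸ C) := by
    by_contra hne
    have := Equiv.swap_apply_of_ne_of_ne (a := some ((1:G) : G ⧸ C)) (b := (none : X))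
      (x := some (g • ((1 : G) : G ⧸ C))) (by simpa using hne) (by simp)
    rw [this] at h4
    exact Option.some_ne_none _ h4
  apply hg
  have h7 : ((g * 1 : G) : G ⧸ C) = ((1 : G) : G ⧸ C) := h6
  rw [mul_one] at h7
  have := (QuotientGroup.eq).1 h7
  simpa using C.inv_mem this


section Pushout

variable (G₁ : Type u2) (G₂ : Type u3)

/-- The two-element family of groups. -/
def Gb : Bool → Type (max u2 u3) := fun b => cond b (ULift.{u3} G₁) (ULift.{u2} G₂)

instance [Group G₁] [Group G₂] : ∀ b, Group (Gb G₁ G₂ b) := fun b =>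
  Bool.rec (inferInstanceAs (Group (ULift.{u2} G₂))) (inferInstanceAs (Group (ULift.{u3} G₁))) b

instance [Countable G₁] [Countable G₂] : ∀ b, Countable (Gb G₁ G₂ b) := fun b =>
  Bool.rec (inferInstanceAs (Countable (ULift.{u2} G₂)))
    (inferInstanceAs (Countable (ULift.{u3} G₁))) b

variable {G₁ G₂} {H : Type u1} [Group H] [Group G₁] [Group G₂]

/-- The family of maps from the base. -/
def phib (f₁ : H →* G₁) (f₂ : H →* G₂) : ∀ b, H →* Gb G₁ G₂ b := fun b =>
  Bool.rec ((MulEquiv.ulift.symm : G₂ ≃* ULift.{u2} G₂).toMonoidHom.comp f₂)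
    ((MulEquiv.ulift.symm : G₁ ≃* ULift.{u3} G₁).toMonoidHom.comp f₁) b

theorem phib_injective (f₁ : H →* G₁) (f₂ : H →* G₂)
    (hf₁ : Function.Injective f₁) (hf₂ : Function.Injective f₂) :
    ∀ b, Function.Injective (phib f₁ f₂ b) := fun b =>
  Bool.rec ((MulEquiv.ulift.symm : G₂ ≃* ULift.{u2} G₂).injective.comp hf₂)
    ((MulEquiv.ulift.symm : G₁ ≃* ULift.{u3} G₁).injective.comp hf₁) b

theorem pushout_countable [Countable G₁] [Countable G₂] (f₁ : H →* G₁) (f₂ : H →* G₂)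
    [Countable H] :
    Countable (Monoid.PushoutI (phib f₁ f₂)) := by
  have hs : Function.Surjective
      (fun l : List (Σ b, Gb G₁ G₂ b) =>
        (l.map (fun p => Monoid.PushoutI.of (φ := phib f₁ f₂) p.1 p.2)).prod) := by
    intro x
    induction x using Monoid.PushoutI.induction_on with
    | of i g => exact ⟨[⟨i, g⟩], by simp⟩
    | base h => exact ⟨[⟨true, phib f₁ f₂ true h⟩], by simp [Monoid.PushoutI.of_apply_eq_base]⟩
    | mul x y ihx ihy =>
      obtain ⟨lx, rfl⟩ := ihx
      obtain ⟨ly, rfl⟩ := ihy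
      exact ⟨lx ++ ly, by simp⟩
  exact hs.countable

theorem bridge [Countable G₁] [Countable G₂] [Countable H]
    {G : Type u4} [Group G] [Countable G]
    (f₁ : H →* G₁) (f₂ : H →* G₂)
    (hf₁ : Function.Injective f₁) (hf₂ : Function.Injective f₂)
    (j₁ : G₁ →* G) (j₂ : G₂ →* G)
    (hG : IsAmalgamatedProduct.{w} f₁ f₂ j₁ j₂) :
    Function.Injective j₁ ∧ Function.Injective j₂ ∧
      (∀ x₁ x₂, j₁ x₁ = j₂ x₂ → x₁ ∈ f₁.range) := by
  classical
  set φ := phib f₁ f₂ with hφ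
  set P := Monoid.PushoutI φ with hP
  haveI : Countable P := pushout_countable f₁ f₂
  haveI : Small.{w} P := inferInstance
  let E : Shrink.{w} P ≃* P := Shrink.mulEquiv
  have hφinj : ∀ b, Function.Injective (φ b) := phib_injective f₁ f₂ hf₁ hf₂
  let k₁ : G₁ →* Shrink.{w} P :=
    E.symm.toMonoidHom.comp ((Monoid.PushoutI.of (φ := φ) true).comp
      (MulEquiv.ulift.symm : G₁ ≃* ULift.{u3} G₁).toMonoidHom)
  let k₂ : G₂ →* Shrink.{w} P :=
    E.symm.toMonoidHom.comp ((Monoid.PushoutI.of (φ := φ) false).comp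
      (MulEquiv.ulift.symm : G₂ ≃* ULift.{u2} G₂).toMonoidHom)
  have hcomp : k₁.comp f₁ = k₂.comp f₂ := by
    show (E.symm.toMonoidHom.comp ((Monoid.PushoutI.of (φ := φ) true).comp
      (MulEquiv.ulift.symm : G₁ ≃* ULift.{u3} G₁).toMonoidHom)).comp f₁
      = (E.symm.toMonoidHom.comp ((Monoid.PushoutI.of (φ := φ) false).comp
      (MulEquiv.ulift.symm : G₂ ≃* ULift.{u2} G₂).toMonoidHom)).comp f₂
    refine MonoidHom.ext fun x => ?_
    exact congrArg E.symm ((Monoid.PushoutI.of_apply_eq_base φ true x).trans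
      (Monoid.PushoutI.of_apply_eq_base φ false x).symm)
  obtain ⟨k, ⟨hk1, hk2⟩, _⟩ := hG.2 (Shrink.{w} P) _ k₁ k₂ hcomp
  have hk₁inj : Function.Injective k₁ :=
    E.symm.injective.comp ((Monoid.PushoutI.of_injective hφinj true).comp
      (MulEquiv.ulift.symm : G₁ ≃* ULift.{u3} G₁).injective)
  have hk₂inj : Function.Injective k₂ :=
    E.symm.injective.comp ((Monoid.PushoutI.of_injective hφinj false).comp
      (MulEquiv.ulift.symm : G₂ ≃* ULift.{u2} G₂).injective)
  refine ⟨?_, ?_, ?_⟩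
  · have : ⇑k₁ = ⇑k ∘ ⇑j₁ := by rw [← hk1]; rfl
    rw [this] at hk₁inj
    exact Function.Injective.of_comp hk₁inj
  · have : ⇑k₂ = ⇑k ∘ ⇑j₂ := by rw [← hk2]; rfl
    rw [this] at hk₂inj
    exact Function.Injective.of_comp hk₂inj
  · intro x₁ x₂ hx
    have h1 : k₁ x₁ = k₂ x₂ := by
      rw [← hk1, ← hk2]
      exact congrArg k hx
    have h2 : Monoid.PushoutI.of (φ := φ) true (MulEquiv.ulift.symm x₁)
        = Monoid.PushoutI.of (φ := φ) false (MulEquiv.ulift.symm x₂) := by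
      have := congrArg E h1
      rw [show k₁ x₁ = E.symm (Monoid.PushoutI.of (φ := φ) true (MulEquiv.ulift.symm x₁)) from rfl,
        show k₂ x₂ = E.symm (Monoid.PushoutI.of (φ := φ) false (MulEquiv.ulift.symm x₂)) from rfl,
        MulEquiv.apply_symm_apply, MulEquiv.apply_symm_apply] at this
      exact this
    have hmem : Monoid.PushoutI.of (φ := φ) true (MulEquiv.ulift.symm x₁)
        ∈ (Monoid.PushoutI.of (φ := φ) true).range ⊓ (Monoid.PushoutI.of (φ := φ) false).range := by
      refine ⟨⟨_, rfl⟩, ⟨_, h2.symm⟩⟩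
    rw [Monoid.PushoutI.inf_of_range_eq_base_range hφinj (by decide : true ≠ false)] at hmem
    obtain ⟨h, hh⟩ := hmem
    refine ⟨h, ?_⟩
    have : Monoid.PushoutI.of (φ := φ) true (φ true h)
        = Monoid.PushoutI.of (φ := φ) true (MulEquiv.ulift.symm x₁) := by
      rw [Monoid.PushoutI.of_apply_eq_base φ true h, hh]
    have h3 := Monoid.PushoutI.of_injective hφinj true this
    have h4 : (MulEquiv.ulift.symm (f₁ h) : ULift.{u3} G₁) = MulEquiv.ulift.symm x₁ := h3
    exact (MulEquiv.ulift.symm : G₁ ≃* ULift.{u3} G₁).injective h4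

end Pushout

section Words

variable {G : Type*} (A B : Set G)

/-- same-type relation -/
def Trel (x y : G) : Prop := (x ∈ A ∧ y ∈ A) ∨ (x ∈ B ∧ y ∈ B)

/-- alternating relation -/
def Rrel (x y : G) : Prop := (x ∈ A ∧ y ∈ B) ∨ (x ∈ B ∧ y ∈ A)

variable {A B}

theorem Trel.symm_sets {x y : G} (h : Trel A B x y) : Trel B A x y := h.symm

theorem Rrel.symm_sets {x y : G} (h : Rrel A B x y) : Rrel B A x y := h.symm

theorem Trel_A (hAB : ∀ a ∈ A, a ∉ B) {x y : G} (h : Trel A B x y) (hx : x ∈ A) : y ∈ A := by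
  rcases h with ⟨_, hy⟩ | ⟨hx', _⟩
  · exact hy
  · exact absurd hx' (fun hh => hAB x hx hh)

theorem Trel_B (hAB : ∀ a ∈ A, a ∉ B) {x y : G} (h : Trel A B x y) (hx : x ∈ B) : y ∈ B := by
  rcases h with ⟨hx', _⟩ | ⟨_, hy⟩
  · exact absurd hx (hAB x hx')
  · exact hy

theorem f2_mem {l l' : List G} (h : List.Forall₂ (Trel A B) l l') :
    ∀ y ∈ l', y ∈ A ∪ B := by
  induction h with
  | nil => simp
  | cons hab hf ih =>
    intro y hy
    rcases List.mem_cons.1 hy with rfl | hy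
    · rcases hab with ⟨_, hy⟩ | ⟨_, hy⟩
      · exact Or.inl hy
      · exact Or.inr hy
    · exact ih y hy

theorem f2_head {l l' : List G} (h : List.Forall₂ (Trel A B) l l') {x : G}
    (hx : l.head? = some x) : ∃ y, l'.head? = some y ∧ Trel A B x y := by
  cases h with
  | nil => simp at hx
  | cons hab hf =>
    simp only [List.head?_cons, Option.some.injEq] at hx
    subst hx
    exact ⟨_, rfl, hab⟩

theorem f2_reverse {l l' : List G} (h : List.Forall₂ (Trel A B) l l') :
    List.Forall₂ (Trel A B) l.reverse l'.reverse := by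
  induction h with
  | nil => simp
  | cons hab hf ih =>
    simp only [List.reverse_cons]
    exact List.rel_append ih (List.Forall₂.cons hab List.Forall₂.nil)

theorem f2_last {l l' : List G} (h : List.Forall₂ (Trel A B) l l') {x : G}
    (hx : l.getLast? = some x) : ∃ y, l'.getLast? = some y ∧ Trel A B x y := by
  have := f2_head (f2_reverse h) (x := x) (by rwa [List.head?_reverse])
  simpa [List.head?_reverse] using this

theorem f2_nil {l' : List G} (h : List.Forall₂ (Trel A B) [] l') : l' = [] :=
  List.forall₂_nil_left_iff.1 h

theorem f2_ne_nil {l l' : List G} (h : List.Forall₂ (Trel A B) l l') (hl : l ≠ []) :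
    l' ≠ [] := by
  cases h with
  | nil => exact absurd rfl hl
  | cons _ _ => simp

theorem chain_transfer (hAB : ∀ a ∈ A, a ∉ B) {l l' : List G}
    (h : List.Forall₂ (Trel A B) l l') (hc : l.Chain' (Rrel A B)) :
    l'.Chain' (Rrel A B) := by
  induction h with
  | nil => exact List.isChain_nil
  | @cons a b l₁ l₂ hab hf ih =>
    simp only [List.Chain', List.isChain_cons] at hc ⊢
    refine ⟨?_, ih hc.2⟩
    intro y' hy'
    cases hf with
    | nil => simp at hy'
    | @cons c c' l₃ l₄ hcc hf₂ =>
      simp only [List.head?_cons, Option.mem_def, Option.some.injEq] at hy'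
      subst hy'
      have hac : Rrel A B a c := hc.1 c rfl
      rcases hac with ⟨ha, hcB⟩ | ⟨ha, hcA⟩
      · exact Or.inl ⟨Trel_A hAB hab ha, Trel_B hAB hcc hcB⟩
      · exact Or.inr ⟨Trel_B hAB hab ha, Trel_A hAB hcc hcA⟩

end Words

section Core

variable {G : Type*} [Group G] {Hs SA SB : Subgroup G} {A B : Set G}

/-- Push a base element leftward through an alternating word. -/
theorem pushLeft
    (hRA : ∀ a ∈ A, ∀ h ∈ Hs, ∃ h' ∈ Hs, ∃ a' ∈ A, a * h = h' * a')
    (hRB : ∀ b ∈ B, ∀ h ∈ Hs, ∃ h' ∈ Hs, ∃ b' ∈ B, b * h = h' * b') :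
    ∀ (l : List G), (∀ x ∈ l, x ∈ A ∪ B) → ∀ h ∈ Hs,
      ∃ h' ∈ Hs, ∃ l' : List G, l.prod * h = h' * l'.prod ∧
        List.Forall₂ (Trel A B) l l' := by
  intro l
  induction l with
  | nil => intro _ h hh; exact ⟨h, hh, [], by simp, List.Forall₂.nil⟩
  | cons a l ih =>
    intro hmem h hh
    obtain ⟨h₂, hh₂, l₂, heq₂, hf₂⟩ := ih (fun x hx => hmem x (List.mem_cons_of_mem _ hx)) h hh
    rcases hmem a List.mem_cons_self with ha | ha
    · obtain ⟨h₃, hh₃, a', ha', heq₃⟩ := hRA a ha h₂ hh₂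
      refine ⟨h₃, hh₃, a' :: l₂, ?_, List.Forall₂.cons (Or.inl ⟨ha, ha'⟩) hf₂⟩
      rw [List.prod_cons, List.prod_cons, mul_assoc, heq₂, ← mul_assoc, heq₃, mul_assoc]
    · obtain ⟨h₃, hh₃, b', hb', heq₃⟩ := hRB a ha h₂ hh₂
      refine ⟨h₃, hh₃, b' :: l₂, ?_, List.Forall₂.cons (Or.inr ⟨ha, hb'⟩) hf₂⟩
      rw [List.prod_cons, List.prod_cons, mul_assoc, heq₂, ← mul_assoc, heq₃, mul_assoc]

/-- Multiplying a normal word on the right by a generator of type `A`. -/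
theorem rightMulA
    (hAB : ∀ a ∈ A, a ∉ B)
    (hASA : A ⊆ (SA : Set G))
    (hRA : ∀ a ∈ A, ∀ h ∈ Hs, ∃ h' ∈ Hs, ∃ a' ∈ A, a * h = h' * a')
    (hRB : ∀ b ∈ B, ∀ h ∈ Hs, ∃ h' ∈ Hs, ∃ b' ∈ B, b * h = h' * b')
    (hGA : ∀ h ∈ Hs, ∀ s ∈ SA, h * s ∈ Hs ∨ ∃ h' ∈ Hs, ∃ a' ∈ A, h * s = h' * a')
    (l : List G) (hmem : ∀ x ∈ l, x ∈ A ∪ B) (hc : l.Chain' (Rrel A B))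
    (h : G) (hh : h ∈ Hs) (s : G) (hs : s ∈ SA) :
    h * l.prod * s ∈ Hs ∨
      ∃ h' ∈ Hs, ∃ l' : List G, (∀ x ∈ l', x ∈ A ∪ B) ∧ l'.Chain' (Rrel A B) ∧
        h * l.prod * s = h' * l'.prod ∧
        (∀ y, l.head? = some y → ∃ y', l'.head? = some y' ∧ Trel A B y y') := by
  rcases List.eq_nil_or_concat l with rfl | ⟨l₀, t, rfl⟩
  · -- empty word
    rcases hGA h hh s hs with hin | ⟨h', hh', a', ha', heq⟩
    · left; simpa using hin
    · right
      refine ⟨h', hh', [a'], by simp [ha'], List.isChain_singleton _, by simpa using heq, by simp⟩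
  · simp only [List.concat_eq_append] at hmem hc ⊢
    have hmem₀ : ∀ x ∈ l₀, x ∈ A ∪ B := fun x hx => hmem x (by simp [hx])
    have hct := List.isChain_append.1 hc
    have ht : t ∈ A ∪ B := hmem t (by simp)
    -- head? transfer helper
    have headcase : ∀ (l₃ : List G), List.Forall₂ (Trel A B) l₀ l₃ → l₀ ≠ [] →
        ∀ (a' : G) (y : G), (l₀ ++ [t]).head? = some y →
          ∃ y', (l₃ ++ [a']).head? = some y' ∧ Trel A B y y' := by
      intro l₃ hf₃ hne a' y hy
      have hy₀ : l₀.head? = some y := by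
        obtain ⟨z, l₀', rfl⟩ := List.exists_cons_of_ne_nil hne
        simpa using hy
      obtain ⟨y', hy', hT⟩ := f2_head hf₃ hy₀
      refine ⟨y', ?_, hT⟩
      have hl₃ : l₃ ≠ [] := f2_ne_nil hf₃ hne
      obtain ⟨w, l₃', rfl⟩ := List.exists_cons_of_ne_nil hl₃
      simpa using hy'
    rcases ht with htA | htB
    · -- last letter has type A, merge t * s
      have hts : t * s ∈ SA := mul_mem (hASA htA) hs
      rcases hGA 1 (one_mem _) (t * s) hts with hin | ⟨h₂, hh₂, a', ha', heq⟩
      · -- t * s lies in the base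
        rw [one_mul] at hin
        obtain ⟨h₃, hh₃, l₃, heq₃, hf₃⟩ := pushLeft hRA hRB l₀ hmem₀ (t * s) hin
        have hprod : h * (l₀ ++ [t]).prod * s = (h * h₃) * l₃.prod := by
          calc h * (l₀ ++ [t]).prod * s = h * (l₀.prod * (t * s)) := by
                simp [List.prod_append, mul_assoc]
            _ = h * (h₃ * l₃.prod) := by rw [heq₃]
            _ = (h * h₃) * l₃.prod := by rw [mul_assoc]
        rcases eq_or_ne l₀ [] with rfl | hne
        · left
          have hl₃ : l₃ = [] := f2_nil hf₃
          subst hl₃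
          rw [hprod]
          simpa using mul_mem hh hh₃
        · right
          refine ⟨h * h₃, mul_mem hh hh₃, l₃, f2_mem hf₃, chain_transfer hAB hf₃ hct.1,
            hprod, ?_⟩
          intro y hy
          have hy₀ : l₀.head? = some y := by
            obtain ⟨z, l₀', rfl⟩ := List.exists_cons_of_ne_nil hne
            simpa using hy
          exact f2_head hf₃ hy₀
      · -- t * s = h₂ * a'
        rw [one_mul] at heq
        obtain ⟨h₃, hh₃, l₃, heq₃, hf₃⟩ := pushLeft hRA hRB l₀ hmem₀ h₂ hh₂
        have hprod : h * (l₀ ++ [t]).prod * s = (h * h₃) * (l₃ ++ [a']).prod := by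
          calc h * (l₀ ++ [t]).prod * s = h * (l₀.prod * (t * s)) := by
                simp [List.prod_append, mul_assoc]
            _ = h * (l₀.prod * (h₂ * a')) := by rw [heq]
            _ = h * ((l₀.prod * h₂) * a') := by rw [mul_assoc]
            _ = h * ((h₃ * l₃.prod) * a') := by rw [heq₃]
            _ = (h * h₃) * (l₃ ++ [a']).prod := by simp [List.prod_append, mul_assoc]
        right
        have hmem₃ : ∀ x ∈ l₃ ++ [a'], x ∈ A ∪ B := by
          intro x hx
          rcases List.mem_append.1 hx with hx | hx
          · exact f2_mem hf₃ x hx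
          · simp only [List.mem_singleton] at hx
            subst hx
            exact Or.inl ha'
        have hchain₃ : (l₃ ++ [a']).Chain' (Rrel A B) := by
          simp only [List.Chain', List.isChain_append]
          refine ⟨chain_transfer hAB hf₃ hct.1, List.isChain_singleton _, ?_⟩
          intro x hx y hy
          simp only [List.head?_cons, Option.mem_def, Option.some.injEq] at hy
          subst hy
          have hl₃ : l₃ ≠ [] := by
            intro hl
            subst hl
            simp at hx
          have hl₀ : l₀ ≠ [] := by
            intro hl
            subst hl
            exact hl₃ (f2_nil hf₃)
          have hz : l₀.getLast? = some (l₀.getLast hl₀) := List.getLast?_eq_getLast hl₀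
          obtain ⟨x₀, hx₀, hT⟩ := f2_last hf₃ hz
          have hxx : x₀ = x := by
            rw [Option.mem_def] at hx
            rw [hx] at hx₀
            exact (Option.some.injEq _ _ ▸ hx₀).symm ▸ rfl
          subst hxx
          have hjunc : Rrel A B (l₀.getLast hl₀) t := hct.2.2 _ (by rw [hz]; rfl) t rfl
          rcases hjunc with ⟨_, htB'⟩ | ⟨hzB, _⟩
          · exact absurd htB' (hAB t htA)
          · exact Or.inr ⟨Trel_B hAB hT hzB, ha'⟩
        refine ⟨h * h₃, mul_mem hh hh₃, l₃ ++ [a'], hmem₃, hchain₃, hprod, ?_⟩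
        intro y hy
        rcases eq_or_ne l₀ [] with rfl | hne
        · have hl₃ : l₃ = [] := f2_nil hf₃
          subst hl₃
          simp only [List.nil_append, List.head?_cons, Option.some.injEq] at hy ⊢
          subst hy
          exact ⟨a', rfl, Or.inl ⟨htA, ha'⟩⟩
        · exact headcase l₃ hf₃ hne a' y hy
    · -- last letter has type B, generator of type A
      rcases hGA 1 (one_mem _) s hs with hin | ⟨h₂, hh₂, a', ha', heq⟩
      · -- s itself lies in the base
        rw [one_mul] at hin
        obtain ⟨h₃, hh₃, l₃, heq₃, hf₃⟩ := pushLeft hRA hRB (l₀ ++ [t]) hmem s hin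
        have hprod : h * (l₀ ++ [t]).prod * s = (h * h₃) * l₃.prod := by
          rw [mul_assoc, heq₃, mul_assoc]
        right
        refine ⟨h * h₃, mul_mem hh hh₃, l₃, f2_mem hf₃, chain_transfer hAB hf₃ hc, hprod, ?_⟩
        intro y hy
        exact f2_head hf₃ hy
      · -- s = h₂ * a'
        rw [one_mul] at heq
        obtain ⟨h₃, hh₃, l₃, heq₃, hf₃⟩ := pushLeft hRA hRB (l₀ ++ [t]) hmem h₂ hh₂
        have hprod : h * (l₀ ++ [t]).prod * s = (h * h₃) * (l₃ ++ [a']).prod := by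
          calc h * (l₀ ++ [t]).prod * s = h * ((l₀ ++ [t]).prod * (h₂ * a')) := by
                rw [mul_assoc, heq]
            _ = h * (((l₀ ++ [t]).prod * h₂) * a') := by rw [mul_assoc]
            _ = h * ((h₃ * l₃.prod) * a') := by rw [heq₃]
            _ = (h * h₃) * (l₃ ++ [a']).prod := by simp [List.prod_append, mul_assoc]
        right
        have hl₃ : l₃ ≠ [] := f2_ne_nil hf₃ (by simp)
        have hmem₃ : ∀ x ∈ l₃ ++ [a'], x ∈ A ∪ B := by
          intro x hx
          rcases List.mem_append.1 hx with hx | hx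
          · exact f2_mem hf₃ x hx
          · simp only [List.mem_singleton] at hx
            subst hx
            exact Or.inl ha'
        have hchain₃ : (l₃ ++ [a']).Chain' (Rrel A B) := by
          simp only [List.Chain', List.isChain_append]
          refine ⟨chain_transfer hAB hf₃ hc, List.isChain_singleton _, ?_⟩
          intro x hx y hy
          simp only [List.head?_cons, Option.mem_def, Option.some.injEq] at hy
          subst hy
          have hlast : (l₀ ++ [t]).getLast? = some t := List.getLast?_concat
          obtain ⟨x₀, hx₀, hT⟩ := f2_last hf₃ hlast
          have hxx : x₀ = x := by
            rw [Option.mem_def] at hx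
            rw [hx] at hx₀
            exact Option.some.inj hx₀.symm
          subst hxx
          exact Or.inr ⟨Trel_B hAB hT htB, ha'⟩
        refine ⟨h * h₃, mul_mem hh hh₃, l₃ ++ [a'], hmem₃, hchain₃, hprod, ?_⟩
        intro y hy
        obtain ⟨y', hy', hT⟩ := f2_head hf₃ hy
        refine ⟨y', ?_, hT⟩
        obtain ⟨w, l₃', rfl⟩ := List.exists_cons_of_ne_nil hl₃
        simpa using hy'

end Core

/-- `l` is an alternating word in the letter sets `A` and `B`: every letter lies in
`A ∪ B` and consecutive letters come from different sets. -/
def IsAltWord {G : Type*} (A B : Set G) (l : List G) : Prop :=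
  (∀ x ∈ l, x ∈ A ∪ B) ∧ l.Chain' (fun x y => (x ∈ A ∧ y ∈ B) ∨ (x ∈ B ∧ y ∈ A))

/-- Let `G = G₁ *_H G₂` with transversals `T₁, T₂` (containing `1`) for the right cosets
of `H` in `G₁` and `G₂`, and let `p₁` be the indicator function of the set of elements of
`G` whose normal form `h t₁ t₂ ⋯ t_k` begins with a letter `t₁ ∈ T₁ ∖ {1}`. Then for
every `g ∈ G` and every sequence `(gₙ)` going to infinity relative to `{H}`, one has
`p₁(gₙ) - p₁(gₙ g) → 0`; i.e. the image of `p₁` in `ℓ^∞(G)/c₀(G, {H})` is fixed by the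
right translation action of `G`. -/
theorem indicator_rightTranslationInvariant_mod_c0
    {H G₁ G₂ G : Type*} [Group H] [Group G₁] [Group G₂] [Group G]
    [Countable H] [Countable G₁] [Countable G₂] [Countable G]
    (f₁ : H →* G₁) (f₂ : H →* G₂)
    (hf₁ : Function.Injective f₁) (hf₂ : Function.Injective f₂)
    (j₁ : G₁ →* G) (j₂ : G₂ →* G)
    (hG : IsAmalgamatedProduct f₁ f₂ j₁ j₂)
    (T₁ : Set G₁) (T₂ : Set G₂)
    (hT₁ : (1 : G₁) ∈ T₁ ∧ ∀ x : G₁, ∃! t : G₁, t ∈ T₁ ∧ x * t⁻¹ ∈ f₁.range)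
    (hT₂ : (1 : G₂) ∈ T₂ ∧ ∀ x : G₂, ∃! t : G₂, t ∈ T₂ ∧ x * t⁻¹ ∈ f₂.range)
    (p₁ : G → ℂ)
    (hp₁ : p₁ = Set.indicator
      {x : G | ∃ (h : H) (l : List G),
        IsAltWord ((fun a => j₁ a) '' (T₁ \ {1})) ((fun b => j₂ b) '' (T₂ \ {1})) l ∧
        x = j₁ (f₁ h) * l.prod ∧
        ∃ y ∈ (fun a => j₁ a) '' (T₁ \ {1}), l.head? = some y}
      (1 : G → ℂ)) :
    ∀ (g : G) (gs : ℕ → G), TendstoInftyRel {(j₁.comp f₁).range} gs →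
      Filter.Tendsto (fun n => p₁ (gs n) - p₁ (gs n * g)) Filter.atTop (nhds 0) := by
  classical
  obtain ⟨hj₁, hj₂, hint⟩ := bridge f₁ f₂ hf₁ hf₂ j₁ j₂ hG
  have hgen := generation f₁ f₂ j₁ j₂ hG
  set A : Set G := (fun a => j₁ a) '' (T₁ \ {1}) with hA
  set B : Set G := (fun b => j₂ b) '' (T₂ \ {1}) with hB
  set Hs : Subgroup G := (j₁.comp f₁).range with hHs
  set SA : Subgroup G := j₁.range with hSA
  set SB : Subgroup G := j₂.range with hSB
  set S₁ : Set G := {x : G | ∃ (h : H) (l : List G), IsAltWord A B l ∧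
      x = j₁ (f₁ h) * l.prod ∧ ∃ y ∈ A, l.head? = some y} with hS₁
  -- transversal facts
  have htr₁ : ∀ τ : G₁, τ ∈ T₁ → τ ∈ f₁.range → τ = 1 := by
    intro τ hτ hmem
    obtain ⟨t, _, huni⟩ := hT₁.2 τ
    have h1 : τ = t := huni τ ⟨hτ, by rw [mul_inv_cancel]; exact one_mem _⟩
    have h2 : (1 : G₁) = t := huni 1 ⟨hT₁.1, by simpa using hmem⟩
    rw [h1, ← h2]
  have htr₂ : ∀ τ : G₂, τ ∈ T₂ → τ ∈ f₂.range → τ = 1 := by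
    intro τ hτ hmem
    obtain ⟨t, _, huni⟩ := hT₂.2 τ
    have h1 : τ = t := huni τ ⟨hτ, by rw [mul_inv_cancel]; exact one_mem _⟩
    have h2 : (1 : G₂) = t := huni 1 ⟨hT₂.1, by simpa using hmem⟩
    rw [h1, ← h2]
  have hAB : ∀ a ∈ A, a ∉ B := by
    rintro a ⟨τ, ⟨hτT, hτ1⟩, rfl⟩ ⟨σ, ⟨hσT, hσ1⟩, ha⟩
    exact hτ1 (Set.mem_singleton_iff.2 (htr₁ τ hτT (hint τ σ ha.symm)))
  have hBA : ∀ b ∈ B, b ∉ A := fun b hb ha => hAB b ha hb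
  have hHs₂ : ∀ h, h ∈ Hs → ∃ η, j₂ (f₂ η) = h := by
    rintro h ⟨η, rfl⟩
    exact ⟨η, (DFunLike.congr_fun hG.1 η).symm⟩
  have hHs₂' : ∀ η, j₂ (f₂ η) ∈ Hs := by
    intro η
    exact ⟨η, DFunLike.congr_fun hG.1 η⟩
  have hASA : A ⊆ (SA : Set G) := by
    rintro a ⟨τ, _, rfl⟩
    exact ⟨τ, rfl⟩
  have hBSB : B ⊆ (SB : Set G) := by
    rintro b ⟨σ, _, rfl⟩
    exact ⟨σ, rfl⟩
  -- rewriting moves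
  have hRA : ∀ a ∈ A, ∀ h ∈ Hs, ∃ h' ∈ Hs, ∃ a' ∈ A, a * h = h' * a' := by
    rintro a ⟨τ, ⟨hτT, hτ1⟩, rfl⟩ h ⟨η, rfl⟩
    obtain ⟨t, ⟨htT, η', hη'⟩, huni⟩ := hT₁.2 (τ * f₁ η)
    have hx : τ * f₁ η = f₁ η' * t := by rw [hη', inv_mul_cancel_right]
    have ht1 : t ≠ 1 := by
      rintro rfl
      rw [mul_one] at hx
      refine hτ1 (Set.mem_singleton_iff.2 (htr₁ τ hτT ⟨η' * η⁻¹, ?_⟩))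
      rw [map_mul, map_inv, ← hx, mul_inv_cancel_right]
    refine ⟨j₁ (f₁ η'), ⟨η', rfl⟩, j₁ t, ⟨t, ⟨htT, fun hh => ht1 hh⟩, rfl⟩, ?_⟩
    show j₁ τ * j₁ (f₁ η) = j₁ (f₁ η') * j₁ t
    rw [← map_mul, ← map_mul, hx]
  have hRB : ∀ b ∈ B, ∀ h ∈ Hs, ∃ h' ∈ Hs, ∃ b' ∈ B, b * h = h' * b' := by
    rintro b ⟨σ, ⟨hσT, hσ1⟩, rfl⟩ h hh
    obtain ⟨η, rfl⟩ := hHs₂ h hh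
    obtain ⟨t, ⟨htT, η', hη'⟩, huni⟩ := hT₂.2 (σ * f₂ η)
    have hx : σ * f₂ η = f₂ η' * t := by rw [hη', inv_mul_cancel_right]
    have ht1 : t ≠ 1 := by
      rintro rfl
      rw [mul_one] at hx
      refine hσ1 (Set.mem_singleton_iff.2 (htr₂ σ hσT ⟨η' * η⁻¹, ?_⟩))
      rw [map_mul, map_inv, ← hx, mul_inv_cancel_right]
    refine ⟨j₂ (f₂ η'), hHs₂' η', j₂ t, ⟨t, ⟨htT, fun hh => ht1 hh⟩, rfl⟩, ?_⟩
    show j₂ σ * j₂ (f₂ η) = j₂ (f₂ η') * j₂ t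
    rw [← map_mul, ← map_mul, hx]
  have hGA : ∀ h ∈ Hs, ∀ s ∈ SA, h * s ∈ Hs ∨ ∃ h' ∈ Hs, ∃ a' ∈ A, h * s = h' * a' := by
    rintro h ⟨η, rfl⟩ s ⟨σ, rfl⟩
    obtain ⟨t, ⟨htT, η', hη'⟩, huni⟩ := hT₁.2 (f₁ η * σ)
    have hx : f₁ η * σ = f₁ η' * t := by rw [hη', inv_mul_cancel_right]
    rcases eq_or_ne t 1 with rfl | ht1
    · left
      rw [mul_one] at hx
      refine ⟨η', ?_⟩
      show j₁ (f₁ η') = j₁ (f₁ η) * j₁ σ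
      rw [← map_mul, hx]
    · right
      refine ⟨j₁ (f₁ η'), ⟨η', rfl⟩, j₁ t, ⟨t, ⟨htT, fun hh => ht1 hh⟩, rfl⟩, ?_⟩
      show j₁ (f₁ η) * j₁ σ = j₁ (f₁ η') * j₁ t
      rw [← map_mul, ← map_mul, hx]
  have hGB : ∀ h ∈ Hs, ∀ s ∈ SB, h * s ∈ Hs ∨ ∃ h' ∈ Hs, ∃ b' ∈ B, h * s = h' * b' := by
    rintro h hh s ⟨σ, rfl⟩
    obtain ⟨η, rfl⟩ := hHs₂ h hh
    obtain ⟨t, ⟨htT, η', hη'⟩, huni⟩ := hT₂.2 (f₂ η * σ)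
    have hx : f₂ η * σ = f₂ η' * t := by rw [hη', inv_mul_cancel_right]
    rcases eq_or_ne t 1 with rfl | ht1
    · left
      rw [mul_one] at hx
      have : j₂ (f₂ η) * j₂ σ = j₂ (f₂ η') := by rw [← map_mul, hx]
      rw [this]
      exact hHs₂' η'
    · right
      refine ⟨j₂ (f₂ η'), hHs₂' η', j₂ t, ⟨t, ⟨htT, fun hh => ht1 hh⟩, rfl⟩, ?_⟩
      show j₂ (f₂ η) * j₂ σ = j₂ (f₂ η') * j₂ t
      rw [← map_mul, ← map_mul, hx]
  -- transfer of membership in S₁ under right multiplication by a generator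
  have transfer : ∀ x, x ∈ S₁ → ∀ s, s ∈ (SA : Set G) ∪ (SB : Set G) →
      x * s ∉ Hs → x * s ∈ S₁ := by
    rintro x ⟨h₀, l, ⟨hmem, hchain⟩, rfl, y, hyA, hyhead⟩ s hs hnot
    rcases hs with hsA | hsB
    · rcases rightMulA hAB hASA hRA hRB hGA l hmem hchain (j₁ (f₁ h₀)) ⟨h₀, rfl⟩ s hsA with
        hin | ⟨h', hh', l', hmem', hchain', heq, hhead⟩
      · exact absurd hin hnot
      · obtain ⟨h₁', rfl⟩ := hh'
        obtain ⟨y', hy'head, hT⟩ := hhead y hyhead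
        exact ⟨h₁', l', ⟨hmem', hchain'⟩, heq, y', Trel_A hAB hT hyA, hy'head⟩
    · have hmemBA : ∀ z ∈ l, z ∈ B ∪ A := fun z hz => (hmem z hz).symm
      have hchainBA : l.Chain' (Rrel B A) := hchain.imp (fun a b hab => hab.symm)
      rcases rightMulA hBA hBSB hRB hRA hGB l hmemBA hchainBA (j₁ (f₁ h₀)) ⟨h₀, rfl⟩ s hsB with
        hin | ⟨h', hh', l', hmem', hchain', heq, hhead⟩
      · exact absurd hin hnot
      · obtain ⟨h₁', rfl⟩ := hh'
        obtain ⟨y', hy'head, hT⟩ := hhead y hyhead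
        refine ⟨h₁', l', ⟨fun z hz => (hmem' z hz).symm,
          hchain'.imp (fun a b hab => hab.symm)⟩, heq, y', ?_, hy'head⟩
        exact Trel_A hAB (hT.symm : Trel A B y y') hyA
  -- the coset bound, by induction on g
  have key : ∀ g : G, ∃ F : Finset G, ∀ x : G,
      ¬ (x ∈ S₁ ↔ x * g ∈ S₁) → ∃ w ∈ F, x * w ∈ Hs := by
    intro g
    have hg : g ∈ Subgroup.closure (Set.range j₁ ∪ Set.range j₂) := by
      rw [hgen]; exact Subgroup.mem_top g
    induction hg using Subgroup.closure_induction with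
    | mem s hsmem =>
      refine ⟨{1, s}, ?_⟩
      intro x hx
      have hs' : s ∈ (SA : Set G) ∪ (SB : Set G) := hsmem
      have hsinv : s⁻¹ ∈ (SA : Set G) ∪ (SB : Set G) := by
        rcases hs' with h | h
        · exact Or.inl (inv_mem h)
        · exact Or.inr (inv_mem h)
      by_cases h1 : x * s ∈ Hs
      · exact ⟨s, by simp, h1⟩
      by_cases h2 : x ∈ Hs
      · exact ⟨1, by simp, by simpa using h2⟩
      exfalso
      apply hx
      constructor
      · intro hxS
        exact transfer x hxS s hs' h1
      · intro hxsS
        have := transfer (x * s) hxsS s⁻¹ hsinv (by simpa [mul_inv_cancel_right] using h2)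
        simpa [mul_inv_cancel_right] using this
    | one =>
      refine ⟨∅, ?_⟩
      intro x hx
      exact absurd (by rw [mul_one]) hx
    | mul a b ha hb iha ihb =>
      obtain ⟨F₁, hF₁⟩ := iha
      obtain ⟨F₂, hF₂⟩ := ihb
      refine ⟨F₁ ∪ F₂.image (fun w => a * w), ?_⟩
      intro x hx
      rw [← mul_assoc] at hx
      by_cases hmid : (x ∈ S₁ ↔ x * a ∈ S₁)
      · have hx2 : ¬ (x * a ∈ S₁ ↔ x * a * b ∈ S₁) := fun hiff => hx (hmid.trans hiff)
        obtain ⟨w, hwF, hw⟩ := hF₂ (x * a) hx2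
        exact ⟨a * w, Finset.mem_union_right _ (Finset.mem_image_of_mem _ hwF),
          by rwa [← mul_assoc]⟩
      · obtain ⟨w, hwF, hw⟩ := hF₁ x hmid
        exact ⟨w, Finset.mem_union_left _ hwF, hw⟩
    | inv a ha iha =>
      obtain ⟨F, hF⟩ := iha
      refine ⟨F.image (fun w => a⁻¹ * w), ?_⟩
      intro x hx
      have hx2 : ¬ (x * a⁻¹ ∈ S₁ ↔ x * a⁻¹ * a ∈ S₁) := by
        rw [inv_mul_cancel_right]
        exact fun hiff => hx (Iff.symm hiff)
      obtain ⟨w, hwF, hw⟩ := hF (x * a⁻¹) hx2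
      exact ⟨a⁻¹ * w, Finset.mem_image_of_mem _ hwF, by rwa [← mul_assoc]⟩
  -- conclusion
  intro g gs htend
  obtain ⟨F, hF⟩ := key g
  have hfin : {n : ℕ | ¬ (gs n ∈ S₁ ↔ gs n * g ∈ S₁)}.Finite := by
    apply Set.Finite.subset (Set.Finite.biUnion F.finite_toSet
      (fun w _ => htend Hs rfl 1 w⁻¹))
    intro n hn
    obtain ⟨w, hwF, hw⟩ := hF (gs n) hn
    refine Set.mem_biUnion hwF ?_
    exact ⟨gs n * w, hw, by group⟩
  obtain ⟨m, hm⟩ := hfin.bddAbove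
  rw [hp₁]
  refine (tendsto_const_nhds (x := (0 : ℂ))).congr' ?_
  rw [Filter.EventuallyEq, Filter.eventually_atTop]
  refine ⟨m + 1, fun n hn => ?_⟩
  have hniff : (gs n ∈ S₁ ↔ gs n * g ∈ S₁) := by
    by_contra hcon
    exact Nat.not_succ_le_self m (le_trans hn (hm hcon))
  by_cases hmem : gs n ∈ S₁
  · rw [Set.indicator_of_mem hmem, Set.indicator_of_mem (hniff.1 hmem)]
    simp
  · rw [Set.indicator_of_notMem hmem,
      Set.indicator_of_notMem (fun hc => hmem (hniff.2 hc))]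
    simp

end PPx
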